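/- Let G be a locally compact second countable group, H ⊴ G a closed normal subgroup with quotient map π : G → G/H, and let H act on (X,μ) and G/H act on (X′,μ′). Consider the G-action on X″ = X × X′ given by g·(x,x′) = (g·x, π(g)·x′), where the first coordinate uses a G-action restricting to the given H-action. If U ⊆ H is a neighborhood of e in H with (h,y) ↦ h·y injective on U × Y for some Y ⊆ X, and U′ ⊆ G/H is a neighborhood of eH with (k,y′) ↦ k·y′ injective on U′ × Y′ for some Y′ ⊆ X′, then choosing a neighborhood U″ of e in G with π(U″) ⊆ U′ and H ∩ (U″)⁻¹U″ ⊆ U, the map U″ × (Y × Y′) → X″, (g,(y,y′)) ↦ g·(y,y′), is injective. -/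

import Mathlib

open Set

/-- injectivity of the action map on `U'' × (Y × Y')` for the product of an
`H`-cross-section and a `G/H`-cross-section (key step for cross sections of induced
actions). -/
theorem stmt16 {G X X' : Type*} [Group G] [TopologicalSpace G] [IsTopologicalGroup G]
    (H : Subgroup G) [H.Normal] [MulAction G X] [MulAction (G ⧸ H) X']
    (Y : Set X) (Y' : Set X')
    (U : Set H) (hU : U ∈ nhds (1 : H))
    (hinj : Set.InjOn (fun p : H × X => p.1 • p.2) (U ×ˢ Y))
    (U' : Set (G ⧸ H)) (hU' : U' ∈ nhds (1 : G ⧸ H))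
    (hinj' : Set.InjOn (fun p : (G ⧸ H) × X' => p.1 • p.2) (U' ×ˢ Y'))
    (U'' : Set G) (hU'' : U'' ∈ nhds (1 : G))
    (hπ : ∀ g ∈ U'', (QuotientGroup.mk g : G ⧸ H) ∈ U')
    (hsmall : ∀ g ∈ U'', ∀ k ∈ U'', ∀ h : H, (h : G) = g⁻¹ * k → h ∈ U) :
    Set.InjOn (fun p : G × (X × X') =>
        (p.1 • p.2.1, (QuotientGroup.mk p.1 : G ⧸ H) • p.2.2))
      (U'' ×ˢ (Y ×ˢ Y')) := by
  rintro ⟨g, y, y'⟩ ⟨hg, hy, hy'⟩ ⟨k, z, z'⟩ ⟨hk, hz, hz'⟩ heq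
  simp only [Prod.mk.injEq] at heq
  obtain ⟨h1, h2⟩ := heq
  -- use hinj' to get π g = π k
  have hq := hinj' (Set.mk_mem_prod (hπ g hg) hy') (Set.mk_mem_prod (hπ k hk) hz') h2
  have hqq : (QuotientGroup.mk g : G ⧸ H) = QuotientGroup.mk k := congrArg Prod.fst hq
  have hy'z' : y' = z' := congrArg Prod.snd hq
  have hmem : g⁻¹ * k ∈ H := QuotientGroup.eq.mp hqq
  set h : H := ⟨g⁻¹ * k, hmem⟩ with hh
  have hhU : h ∈ U := hsmall g hg k hk h rfl
  have h1U : (1 : H) ∈ U := mem_of_mem_nhds hU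
  have hact : (fun p : H × X => p.1 • p.2) (h, z) = (fun p : H × X => p.1 • p.2) ((1 : H), y) := by
    simp only [one_smul]
    show (h : G) • z = y
    rw [hh]
    show (g⁻¹ * k) • z = y
    rw [mul_smul, ← h1, inv_smul_smul]
  have := hinj (Set.mk_mem_prod hhU hz) (Set.mk_mem_prod h1U hy) hact
  have hh1 : h = 1 := congrArg Prod.fst this
  have hzy : z = y := congrArg Prod.snd this
  have hgk : g = k := by
    have : g⁻¹ * k = 1 := by
      have := congrArg (Subgroup.subtype H) hh1
      simpa [hh] using this
    exact eq_of_inv_mul_eq_one this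
  simp [hgk, hzy, hy'z']
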